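/- Let ε > 0, ξ > 0 and let k ≥ 1 be an integer with ξ/k² ≥ 100. Set t_k = (1/2)(ξ/(k+1) + ξ/k), and set t_{k−1} = (1/2)(ξ/k + ξ/(k−1)) if k ≥ 2 and t_0 = 2ξ if k = 1. Then (1/10)·ε·ξ·k^{−3/2} ≤ ∫_{t_k}^{t_{k−1}} ε·(1+t²)^{1/4}·(ξ/k²)^{1/2}·(1+(t−ξ/k)²)^{−3/4} dt ≤ 100·ε·ξ·k^{−3/2}. -/

import Mathlib

open Real Set MeasureTheory intervalIntegral

noncomputable section

/-- The resonant times: `t_0 = 2ξ` and `t_k = (ξ/(k+1) + ξ/k)/2` for `k ≥ 1`. -/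
def tIdx (ξ : ℝ) (k : ℕ) : ℝ :=
  if k = 0 then 2 * ξ else (ξ / ((k : ℝ) + 1) + ξ / (k : ℝ)) / 2

lemma sq_rpow_quarter {c : ℝ} (hc : 0 ≤ c) : (c ^ 2) ^ ((1:ℝ)/4) = c ^ ((1:ℝ)/2) := by
  rw [← Real.rpow_natCast c 2, ← Real.rpow_mul hc]
  norm_num

lemma sq_rpow_neg34 {c : ℝ} (hc : 0 ≤ c) : (c ^ 2) ^ (-(3/4) : ℝ) = c ^ (-(3/2) : ℝ) := by
  rw [← Real.rpow_natCast c 2, ← Real.rpow_mul hc]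
  norm_num

/-- The tail integral bound: `∫_1^T s^{-3/2} ds ≤ 2` for `T ≥ 1`. -/
lemma tail_integral_le {T : ℝ} (hT : 1 ≤ T) :
    ∫ s in (1:ℝ)..T, s ^ (-(3/2) : ℝ) ≤ 2 := by
  have h0 : (0:ℝ) ∉ Set.uIcc (1:ℝ) T := by
    rw [Set.uIcc_of_le hT]
    intro h
    exact absurd (Set.mem_Icc.mp h).1 (by norm_num)
  rw [integral_rpow (Or.inr ⟨by norm_num, h0⟩)]
  have h1 : (0:ℝ) ≤ T ^ (-(3/2) + 1 : ℝ) := Real.rpow_nonneg (by linarith) _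
  have h2 : (1:ℝ) ^ (-(3/2) + 1 : ℝ) = 1 := Real.one_rpow _
  rw [h2, show (-(3/2 : ℝ) + 1) = -(1/2) by norm_num] at *
  rw [div_le_iff_of_neg (by norm_num)]
  linarith

set_option maxHeartbeats 1000000 in
/-- Main comparison lemma, with abstract endpoints. -/
lemma main_aux (ε C c a b : ℝ) (hε : 0 < ε) (hC : 0 ≤ C) (hc : 100 ≤ c)
    (hA : a ≤ c - 1) (hA0 : 0 ≤ a) (hB1 : c + 1 ≤ b) (hB2 : b ≤ 2 * c) :
    (1/2) * ε * c ^ ((1:ℝ)/2) * C ≤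
        (∫ t in a..b, ε * (1 + t ^ 2) ^ ((1:ℝ)/4) * C * (1 + (t - c) ^ 2) ^ (-(3/4) : ℝ)) ∧
      (∫ t in a..b, ε * (1 + t ^ 2) ^ ((1:ℝ)/4) * C * (1 + (t - c) ^ 2) ^ (-(3/4) : ℝ)) ≤
        12 * ε * c ^ ((1:ℝ)/2) * C := by
  set f : ℝ → ℝ := fun t => ε * (1 + t ^ 2) ^ ((1:ℝ)/4) * C * (1 + (t - c) ^ 2) ^ (-(3/4) : ℝ)
    with hf
  have hcpos : (0:ℝ) < c := by linarith
  set g : ℝ → ℝ := fun t => (1 + (t - c) ^ 2) ^ (-(3/4) : ℝ) with hgdef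
  have hgcont : Continuous g :=
    ((continuous_const.add ((continuous_id.sub continuous_const).pow 2)).rpow_const
      (fun x => Or.inl (by simp only [Pi.add_apply, Pi.pow_apply, Pi.sub_apply, id_eq]; positivity)))
  have hgnonneg : ∀ t, 0 ≤ g t := fun t => Real.rpow_nonneg (by positivity) _
  have hgint : ∀ x y : ℝ, IntervalIntegrable g volume x y :=
    fun x y => hgcont.intervalIntegrable x y
  have hcont : Continuous f := by
    apply Continuous.mul
    · apply Continuous.mul
      · exact continuous_const.mul
          ((continuous_const.add (continuous_pow 2)).rpow_const
            (fun x => Or.inl (by simp only [Pi.add_apply, Pi.pow_apply, Pi.sub_apply, id_eq]; positivity)))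
      · exact continuous_const
    · exact hgcont
  have hnonneg : ∀ t, 0 ≤ f t := fun t => by
    have h1 : (0:ℝ) ≤ (1 + t ^ 2) ^ ((1:ℝ)/4) := Real.rpow_nonneg (by positivity) _
    have h2 : (0:ℝ) ≤ (1 + (t - c) ^ 2) ^ (-(3/4) : ℝ) := Real.rpow_nonneg (by positivity) _
    positivity
  have hab : a ≤ b := by linarith
  have hint : ∀ x y : ℝ, IntervalIntegrable f volume x y :=
    fun x y => hcont.intervalIntegrable x y
  have hcr : (0:ℝ) ≤ c ^ ((1:ℝ)/2) := Real.rpow_nonneg hcpos.le _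
  constructor
  · -- lower bound
    have key : ∀ t ∈ Set.Icc c (c + 1), (1/2) * ε * c ^ ((1:ℝ)/2) * C ≤ f t := by
      intro t ht
      obtain ⟨ht1, ht2⟩ := Set.mem_Icc.mp ht
      have h1 : c ^ ((1:ℝ)/2) ≤ (1 + t ^ 2) ^ ((1:ℝ)/4) := by
        rw [← sq_rpow_quarter hcpos.le]
        exact Real.rpow_le_rpow (by positivity) (by nlinarith) (by norm_num)
      have h2 : (1/2 : ℝ) ≤ (1 + (t - c) ^ 2) ^ (-(3/4) : ℝ) := by
        have hle2 : 1 + (t - c) ^ 2 ≤ 2 := by nlinarith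
        have e1 : (2:ℝ) ^ (-(3/4) : ℝ) ≤ (1 + (t - c) ^ 2) ^ (-(3/4) : ℝ) :=
          Real.rpow_le_rpow_of_nonpos (by positivity) hle2 (by norm_num)
        have e2 : (2:ℝ) ^ (-1 : ℝ) ≤ (2:ℝ) ^ (-(3/4) : ℝ) :=
          Real.rpow_le_rpow_of_exponent_le (by norm_num) (by norm_num)
        have e3 : (2:ℝ) ^ (-1 : ℝ) = 1/2 := by
          rw [Real.rpow_neg_one]; norm_num
        linarith
      calc (1/2) * ε * c ^ ((1:ℝ)/2) * C
          = ε * c ^ ((1:ℝ)/2) * C * (1/2) := by ring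
        _ ≤ ε * (1 + t ^ 2) ^ ((1:ℝ)/4) * C * ((1 + (t - c) ^ 2) ^ (-(3/4) : ℝ)) := by
            apply mul_le_mul _ h2 (by norm_num) (by positivity)
            exact mul_le_mul (mul_le_mul le_rfl h1 hcr hε.le) le_rfl hC (by positivity)
        _ = f t := rfl
    have step1 : (1/2) * ε * c ^ ((1:ℝ)/2) * C ≤ ∫ t in c..(c+1), f t := by
      have := intervalIntegral.integral_mono_on (a := c) (b := c + 1) (μ := volume)
        (f := fun _ => (1/2) * ε * c ^ ((1:ℝ)/2) * C) (g := f) (by linarith)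
        intervalIntegrable_const (hint c (c+1)) key
      simpa using this
    have step2 : (∫ t in c..(c+1), f t) ≤ ∫ t in a..b, f t := by
      apply intervalIntegral.integral_mono_interval (by linarith) (by linarith) hB1
      · filter_upwards with t using hnonneg t
      · exact hint a b
    linarith
  · -- upper bound
    set K : ℝ := 2 * ε * c ^ ((1:ℝ)/2) * C with hK
    have hKnn : 0 ≤ K := by rw [hK]; positivity
    have hfg : ∀ t ∈ Set.Icc a b, f t ≤ K * g t := by
      intro t ht
      obtain ⟨ht1, ht2⟩ := Set.mem_Icc.mp ht
      have htnn : 0 ≤ t := le_trans hA0 ht1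
      have h16 : 1 + t ^ 2 ≤ 16 * c ^ 2 := by nlinarith
      have h1 : (1 + t ^ 2) ^ ((1:ℝ)/4) ≤ 2 * c ^ ((1:ℝ)/2) := by
        calc (1 + t ^ 2) ^ ((1:ℝ)/4) ≤ (16 * c ^ 2) ^ ((1:ℝ)/4) :=
              Real.rpow_le_rpow (by positivity) h16 (by norm_num)
          _ = 2 * c ^ ((1:ℝ)/2) := by
              rw [Real.mul_rpow (by norm_num) (sq_nonneg c), sq_rpow_quarter hcpos.le]
              congr 1
              rw [show (16:ℝ) = (2:ℝ) ^ (4:ℕ) by norm_num, ← Real.rpow_natCast (2:ℝ) 4,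
                ← Real.rpow_mul (by norm_num)]
              norm_num
      calc f t = ε * (1 + t ^ 2) ^ ((1:ℝ)/4) * C * g t := rfl
        _ ≤ ε * (2 * c ^ ((1:ℝ)/2)) * C * g t := by
            apply mul_le_mul_of_nonneg_right _ (hgnonneg t)
            apply mul_le_mul_of_nonneg_right _ hC
            exact mul_le_mul_of_nonneg_left h1 hε.le
        _ = K * g t := by rw [hK]; ring
    have step1 : (∫ t in a..b, f t) ≤ K * ∫ t in a..b, g t := by
      rw [← intervalIntegral.integral_const_mul]
      exact intervalIntegral.integral_mono_on hab (hint a b) ((hgint a b).const_mul K) hfg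
    -- bound ∫ g by 6
    have e1 : (∫ t in a..(c-1), g t) + ∫ t in (c-1)..(c+1), g t = ∫ t in a..(c+1), g t :=
      intervalIntegral.integral_add_adjacent_intervals (hgint _ _) (hgint _ _)
    have e2 : (∫ t in a..(c+1), g t) + ∫ t in (c+1)..b, g t = ∫ t in a..b, g t :=
      intervalIntegral.integral_add_adjacent_intervals (hgint _ _) (hgint _ _)
    have hmid : (∫ t in (c-1)..(c+1), g t) ≤ 2 := by
      have hptw : ∀ t ∈ Set.Icc (c-1) (c+1), g t ≤ 1 := fun t ht =>
        Real.rpow_le_one_of_one_le_of_nonpos (by nlinarith [sq_nonneg (t - c)]) (by norm_num)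
      calc (∫ t in (c-1)..(c+1), g t) ≤ ∫ _ in (c-1)..(c+1), (1:ℝ) :=
            intervalIntegral.integral_mono_on (by linarith) (hgint _ _)
              intervalIntegrable_const hptw
        _ = 2 := by rw [intervalIntegral.integral_const, smul_eq_mul, mul_one]; ring
    have hright : (∫ t in (c+1)..b, g t) ≤ 2 := by
      have hptw : ∀ t ∈ Set.Icc (c+1) b, g t ≤ (t - c) ^ (-(3/2) : ℝ) := by
        intro t ht
        obtain ⟨h1', h2'⟩ := Set.mem_Icc.mp ht
        have htc : 1 ≤ t - c := by linarith
        rw [← sq_rpow_neg34 (by linarith : (0:ℝ) ≤ t - c)]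
        exact Real.rpow_le_rpow_of_nonpos (by nlinarith) (by nlinarith) (by norm_num)
      have hcontu : ContinuousOn (fun t => (t - c) ^ (-(3/2) : ℝ)) (Set.uIcc (c+1) b) := by
        apply ContinuousOn.rpow_const (continuousOn_id.sub continuousOn_const)
        intro x hx
        rw [Set.uIcc_of_le (by linarith)] at hx
        have h1x : 1 ≤ x - c := by linarith [hx.1]
        exact Or.inl (by simp only [Pi.sub_apply, id_eq]; intro h; linarith)
      have hintu : IntervalIntegrable (fun t => (t - c) ^ (-(3/2) : ℝ)) volume (c+1) b :=
        hcontu.intervalIntegrable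
      calc (∫ t in (c+1)..b, g t) ≤ ∫ t in (c+1)..b, (t - c) ^ (-(3/2) : ℝ) :=
            intervalIntegral.integral_mono_on (by linarith) (hgint _ _) hintu hptw
        _ = ∫ s in (c+1-c)..(b-c), s ^ (-(3/2) : ℝ) :=
            intervalIntegral.integral_comp_sub_right (fun s => s ^ (-(3/2) : ℝ)) c
        _ = ∫ s in (1:ℝ)..(b-c), s ^ (-(3/2) : ℝ) := by rw [show c+1-c = (1:ℝ) by ring]
        _ ≤ 2 := tail_integral_le (by linarith)
    have hleft : (∫ t in a..(c-1), g t) ≤ 2 := by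
      have hptw : ∀ t ∈ Set.Icc a (c-1), g t ≤ (c - t) ^ (-(3/2) : ℝ) := by
        intro t ht
        obtain ⟨h1', h2'⟩ := Set.mem_Icc.mp ht
        have htc : 1 ≤ c - t := by linarith
        rw [← sq_rpow_neg34 (by linarith : (0:ℝ) ≤ c - t)]
        exact Real.rpow_le_rpow_of_nonpos (by nlinarith) (by nlinarith) (by norm_num)
      have hcontu : ContinuousOn (fun t => (c - t) ^ (-(3/2) : ℝ)) (Set.uIcc a (c-1)) := by
        apply ContinuousOn.rpow_const (continuousOn_const.sub continuousOn_id)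
        intro x hx
        rw [Set.uIcc_of_le (by linarith)] at hx
        have h1x : 1 ≤ c - x := by linarith [hx.2]
        exact Or.inl (by simp only [Pi.sub_apply, id_eq]; intro h; linarith)
      have hintu : IntervalIntegrable (fun t => (c - t) ^ (-(3/2) : ℝ)) volume a (c-1) :=
        hcontu.intervalIntegrable
      calc (∫ t in a..(c-1), g t) ≤ ∫ t in a..(c-1), (c - t) ^ (-(3/2) : ℝ) :=
            intervalIntegral.integral_mono_on (by linarith) (hgint _ _) hintu hptw
        _ = ∫ s in (c-(c-1))..(c-a), s ^ (-(3/2) : ℝ) :=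
            intervalIntegral.integral_comp_sub_left (fun s => s ^ (-(3/2) : ℝ)) c
        _ = ∫ s in (1:ℝ)..(c-a), s ^ (-(3/2) : ℝ) := by rw [show c-(c-1) = (1:ℝ) by ring]
        _ ≤ 2 := tail_integral_le (by linarith)
    have hJ : (∫ t in a..b, g t) ≤ 6 := by linarith
    have : K * (∫ t in a..b, g t) ≤ K * 6 := mul_le_mul_of_nonneg_left hJ hKnn
    have hfin : K * 6 = 12 * ε * c ^ ((1:ℝ)/2) * C := by rw [hK]; ring
    linarith

lemma rpow_half_alg (ξ : ℝ) (n : ℝ) (hξ : 0 < ξ) (hn : 0 < n) :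
    (ξ / n) ^ ((1:ℝ)/2) * (ξ / n ^ 2) ^ ((1:ℝ)/2) = ξ * n ^ (-(3/2) : ℝ) := by
  rw [← Real.mul_rpow (by positivity) (by positivity)]
  have e : ξ / n * (ξ / n ^ 2) = ξ ^ 2 / n ^ 3 := by
    field_simp
  rw [e, Real.div_rpow (by positivity) (by positivity)]
  have e1 : (ξ ^ 2) ^ ((1:ℝ)/2) = ξ := by
    rw [← Real.rpow_natCast ξ 2, ← Real.rpow_mul hξ.le]
    norm_num
  have e2 : (n ^ 3) ^ ((1:ℝ)/2) = n ^ ((3:ℝ)/2) := by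
    rw [← Real.rpow_natCast n 3, ← Real.rpow_mul hn.le]
    norm_num
  rw [e1, e2, Real.rpow_neg hn.le, div_eq_mul_inv]
  try norm_num

set_option maxHeartbeats 1000000 in
/-- Lemma: toy model resonance: for `ε, ξ > 0` and `k ≥ 1` with
`ξ/k² ≥ 100`, the resonance integral over `I_k = (t_k, t_{k−1})` is comparable to
`ε ξ k^{−3/2}` within the stated factors. -/
theorem statement12 (ε ξ : ℝ) (k : ℕ) (hε : 0 < ε) (hξ : 0 < ξ) (hk : 1 ≤ k)
    (hres : 100 ≤ ξ / (k : ℝ) ^ 2) :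
    (1 / 10) * ε * ξ * (k : ℝ) ^ (-(3 / 2) : ℝ) ≤
        (∫ t in tIdx ξ k..tIdx ξ (k - 1),
          ε * (1 + t ^ 2) ^ ((1 : ℝ) / 4) * (ξ / (k : ℝ) ^ 2) ^ ((1 : ℝ) / 2) *
            (1 + (t - ξ / (k : ℝ)) ^ 2) ^ (-(3 / 4) : ℝ)) ∧
      (∫ t in tIdx ξ k..tIdx ξ (k - 1),
          ε * (1 + t ^ 2) ^ ((1 : ℝ) / 4) * (ξ / (k : ℝ) ^ 2) ^ ((1 : ℝ) / 2) *
            (1 + (t - ξ / (k : ℝ)) ^ 2) ^ (-(3 / 4) : ℝ)) ≤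
        100 * ε * ξ * (k : ℝ) ^ (-(3 / 2) : ℝ) := by
  set n : ℝ := (k : ℝ) with hn
  have hn1 : 1 ≤ n := by rw [hn]; exact_mod_cast hk
  have hn0 : 0 < n := by linarith
  have hξn : 100 * n ^ 2 ≤ ξ := (le_div_iff₀ (by positivity : (0:ℝ) < n ^ 2)).mp hres
  set c : ℝ := ξ / n with hc
  set C : ℝ := (ξ / n ^ 2) ^ ((1:ℝ)/2) with hCdef
  have hC : 0 ≤ C := Real.rpow_nonneg (by positivity) _
  have hc100 : 100 ≤ c := by
    rw [hc, le_div_iff₀ hn0]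
    nlinarith
  -- endpoints
  have ha_eq : tIdx ξ k = (ξ / (n + 1) + ξ / n) / 2 := by
    rw [tIdx, if_neg (by omega)]
  have hA0 : 0 ≤ tIdx ξ k := by
    rw [ha_eq]
    positivity
  have hA : tIdx ξ k ≤ c - 1 := by
    rw [ha_eq, hc]
    have e : ξ / n - ξ / (n + 1) = ξ / (n * (n + 1)) := by
      field_simp
      ring
    have h2 : 2 ≤ ξ / (n * (n + 1)) := by
      rw [le_div_iff₀ (by positivity)]
      nlinarith
    have h2' : 2 ≤ ξ / n - ξ / (n + 1) := by rw [e]; exact h2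
    linarith
  have hB : c + 1 ≤ tIdx ξ (k - 1) ∧ tIdx ξ (k - 1) ≤ 2 * c := by
    rcases eq_or_lt_of_le hk with h1 | h2
    · -- k = 1
      have hk1 : k = 1 := h1.symm
      subst hk1
      have hn' : n = 1 := by rw [hn]; norm_num
      have hcξ : c = ξ := by rw [hc, hn', div_one]
      rw [show (1 - 1 : ℕ) = 0 from rfl, tIdx, if_pos rfl]
      constructor
      · linarith
      · linarith
    · -- k ≥ 2
      have hk2 : 2 ≤ k := h2
      have hm0 : (k - 1 : ℕ) ≠ 0 := by omega
      have hcast : ((k - 1 : ℕ) : ℝ) = n - 1 := by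
        rw [hn, Nat.cast_sub hk]
        norm_num
      have hb_eq : tIdx ξ (k - 1) = (ξ / n + ξ / (n - 1)) / 2 := by
        rw [tIdx, if_neg hm0, hcast]
        norm_num
      have hn2 : (2:ℝ) ≤ n := by rw [hn]; exact_mod_cast hk2
      have hne1 : n - 1 ≠ 0 := by linarith
      have hne0 : n ≠ 0 := ne_of_gt hn0
      have e : ξ / (n - 1) - ξ / n = ξ / (n * (n - 1)) := by
        field_simp
        ring
      have h2' : 2 ≤ ξ / (n * (n - 1)) := by
        rw [le_div_iff₀ (by nlinarith)]
        nlinarith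
      have h2'' : 2 ≤ ξ / (n - 1) - ξ / n := by rw [e]; exact h2'
      have h3 : ξ / (n - 1) ≤ (3 * ξ) / n := by
        rw [div_le_div_iff₀ (by linarith) hn0]
        nlinarith
      have h4 : (3 * ξ) / n = 3 * (ξ / n) := by ring
      constructor
      · rw [hb_eq, hc]
        linarith
      · rw [hb_eq, hc]
        linarith
  obtain ⟨hB1, hB2⟩ := hB
  have main := main_aux ε C c (tIdx ξ k) (tIdx ξ (k - 1)) hε hC hc100 hA hA0 hB1 hB2
  have halg : c ^ ((1:ℝ)/2) * C = ξ * n ^ (-(3/2) : ℝ) := by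
    rw [hc, hCdef]
    exact rpow_half_alg ξ n hξ hn0
  have hrnn : 0 ≤ ξ * n ^ (-(3/2) : ℝ) := by positivity
  constructor
  · refine le_trans ?_ main.1
    have : (1/2) * ε * c ^ ((1:ℝ)/2) * C = (1/2) * ε * (ξ * n ^ (-(3/2) : ℝ)) := by
      rw [← halg]; ring
    rw [this]
    nlinarith
  · refine le_trans main.2 ?_
    have : 12 * ε * c ^ ((1:ℝ)/2) * C = 12 * ε * (ξ * n ^ (-(3/2) : ℝ)) := by
      rw [← halg]; ring
    rw [this]
    nlinarith

end
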